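/- The generalized Givens matrix G of the previous construction is unitary: with q₁₁ = x₁/‖x‖₂, q₂₁ = x₂/‖x‖₂, q₁₂ = |q₂₁|, q₂₂ = -|q₂₁| (q₂₁)^{-H} (q₁₁)^H (assuming x₂ ≠ 0), the matrix G = [[q₁₁, q₁₂], [q₂₁, q₂₂]] satisfies G^H G = I₂ over ℍ. -/

import Mathlib

open Quaternion Matrix

theorem generalized_givens_unitary (x₁ x₂ : Quaternion ℝ) (hx₂ : x₂ ≠ 0) :
    let r : ℝ := Real.sqrt (‖x₁‖ ^ 2 + ‖x₂‖ ^ 2)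
    let q₁₁ : Quaternion ℝ := x₁ / (r : Quaternion ℝ)
    let q₂₁ : Quaternion ℝ := x₂ / (r : Quaternion ℝ)
    let q₁₂ : Quaternion ℝ := ((‖q₂₁‖ : ℝ) : Quaternion ℝ)
    let q₂₂ : Quaternion ℝ := -((‖q₂₁‖ : ℝ) : Quaternion ℝ) * star q₂₁⁻¹ * star q₁₁
    let G : Matrix (Fin 2) (Fin 2) (Quaternion ℝ) := !![q₁₁, q₁₂; q₂₁, q₂₂]
    Gᴴ * G = 1 := by
  intro r q₁₁ q₂₁ q₁₂ q₂₂ G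
  have hx2 : (0:ℝ) < ‖x₂‖ ^ 2 := pow_pos (norm_pos_iff.mpr hx₂) 2
  have hr : 0 < r := Real.sqrt_pos.mpr (by positivity)
  have hr2 : r ^ 2 = ‖x₁‖ ^ 2 + ‖x₂‖ ^ 2 := Real.sq_sqrt (by positivity)
  have hrq : (r : Quaternion ℝ) ≠ 0 := by
    simpa using Quaternion.coe_injective.ne hr.ne'
  have hq21 : q₂₁ ≠ 0 := div_ne_zero hx₂ hrq
  have hn11 : ‖q₁₁‖ = ‖x₁‖ / r := by
    simp only [q₁₁]
    rw [norm_div, Quaternion.norm_coe, Real.norm_eq_abs, abs_of_pos hr]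
  have hn21 : ‖q₂₁‖ = ‖x₂‖ / r := by
    simp only [q₂₁]
    rw [norm_div, Quaternion.norm_coe, Real.norm_eq_abs, abs_of_pos hr]
  have hsum : ‖q₁₁‖ ^ 2 + ‖q₂₁‖ ^ 2 = 1 := by
    rw [hn11, hn21, div_pow, div_pow, ← add_div, hr2]
    field_simp
  have hstar : ∀ q : Quaternion ℝ, star q * q = ((‖q‖ ^ 2 : ℝ) : Quaternion ℝ) := by
    intro q
    rw [Quaternion.star_mul_self, Quaternion.normSq_eq_norm_mul_self, sq]
  have hinv : star q₂₁⁻¹ = (star q₂₁)⁻¹ := star_inv₀ q₂₁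
  have hs21 : star q₂₁ ≠ 0 := star_ne_zero.mpr hq21
  have e11 : star q₁₁ * q₁₁ + star q₂₁ * q₂₁ = 1 := by
    rw [hstar, hstar, ← Quaternion.coe_add, hsum, Quaternion.coe_one]
  have e12 : star q₁₁ * q₁₂ + star q₂₁ * q₂₂ = 0 := by
    simp only [q₁₂, q₂₂, hinv]
    simp [Quaternion.coe_mul_eq_smul, Quaternion.mul_coe_eq_smul, mul_smul_comm,
      smul_mul_assoc, mul_assoc, mul_inv_cancel_left₀ hs21]
  have e21 : star q₁₂ * q₁₁ + star q₂₂ * q₂₁ = 0 := by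
    simp only [q₁₂, q₂₂, hinv, StarMul.star_mul, star_neg, star_star, star_inv₀,
      Quaternion.star_coe]
    simp [Quaternion.coe_mul_eq_smul, Quaternion.mul_coe_eq_smul, mul_smul_comm,
      smul_mul_assoc, mul_assoc, inv_mul_cancel₀ hq21]
  have h22 : ‖q₂₂‖ = ‖q₁₁‖ := by
    simp only [q₂₂]
    rw [norm_mul, norm_mul, norm_neg, Quaternion.norm_star, Quaternion.norm_star, norm_inv,
      Quaternion.norm_coe, Real.norm_eq_abs, abs_of_nonneg (norm_nonneg q₂₁),
      mul_inv_cancel₀ (norm_ne_zero_iff.mpr hq21), one_mul]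
  have e22 : star q₁₂ * q₁₂ + star q₂₂ * q₂₂ = 1 := by
    rw [hstar, hstar, h22, ← Quaternion.coe_add]
    have : ‖q₁₂‖ = ‖q₂₁‖ := by
      simp only [q₁₂]
      rw [Quaternion.norm_coe, Real.norm_eq_abs, abs_of_nonneg (norm_nonneg q₂₁)]
    rw [this, add_comm, hsum, Quaternion.coe_one]
  have hGH : Gᴴ = !![star q₁₁, star q₂₁; star q₁₂, star q₂₂] :=
    Matrix.ext fun i j => by fin_cases i <;> fin_cases j <;> rfl
  rw [hGH]
  show _ * !![q₁₁, q₁₂; q₂₁, q₂₂] = _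
  rw [Matrix.mul_fin_two, e11, e12, e21, e22, Matrix.one_fin_two]
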